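/- Let M(λ) = (1 - λ/ν)^{-k} be the mgf of a gamma distribution with parameters k, ν > 0 and let β(ω) = ω. Then the function h(S) = S₀ · (∂_λ M^{-1}(λ)|_{λ = S/S₀})^{-1} equals h(S) = (k/ν) S (S/S₀)^{1/k} for 0 < S ≤ S₀, i.e., the reduction of the heterogeneous SIR model with gamma-distributed susceptibility yields a power-law transmission function with exponent p = 1 + 1/k. -/

import Mathlib

open Real

/-- Gamma-distributed susceptibility yields the power-law transmission function:
with M⁻¹(x) = ν(1 - x^{-1/k}), h(S) = S₀ / ((M⁻¹)'(S/S₀)) = (k/ν) S (S/S₀)^{1/k}. -/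
theorem power_law_transmission_from_gamma
    (k ν S₀ : ℝ) (hk : 0 < k) (hν : 0 < ν) (hS₀ : 0 < S₀)
    (Minv : ℝ → ℝ) (hMinv : ∀ x : ℝ, Minv x = ν * (1 - x ^ (-(1 / k))))
    (h : ℝ → ℝ) (hh : ∀ S, h S = S₀ * (deriv Minv (S / S₀))⁻¹) :
    ∀ S : ℝ, 0 < S → S ≤ S₀ → h S = k / ν * S * (S / S₀) ^ (1 / k) := by
  intro S hS hSS₀
  have hx : 0 < S / S₀ := div_pos hS hS₀
  have h1 : HasDerivAt (fun x : ℝ => x ^ (-(1 / k)))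
      (-(1 / k) * (S / S₀) ^ (-(1 / k) - 1)) (S / S₀) :=
    Real.hasDerivAt_rpow_const (Or.inl (ne_of_gt hx))
  have h2 : HasDerivAt (fun x : ℝ => ν * (1 - x ^ (-(1 / k))))
      (ν * (0 - -(1 / k) * (S / S₀) ^ (-(1 / k) - 1))) (S / S₀) :=
    (((hasDerivAt_const _ (1:ℝ)).sub h1)).const_mul ν
  have hD : HasDerivAt Minv (ν * (0 - -(1 / k) * (S / S₀) ^ (-(1 / k) - 1))) (S / S₀) := by
    rw [funext hMinv]; exact h2
  have hderiv : deriv Minv (S / S₀)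
      = ν * (1 / k) * (S / S₀) ^ (-(1 / k) - 1) := by
    rw [hD.deriv]; ring
  have hrw : (S / S₀ : ℝ) ^ (-(1 / k) - 1) = ((S / S₀) ^ (1 / k) * (S / S₀))⁻¹ := by
    rw [show -(1 / k) - 1 = -(1 / k + 1) by ring, Real.rpow_neg hx.le,
      Real.rpow_add hx, Real.rpow_one]
  have hpow : (0:ℝ) < (S / S₀) ^ (1 / k) := Real.rpow_pos_of_pos hx _
  rw [hh, hderiv, hrw]
  field_simp
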